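/- For every μ ≥ 0, the convolution integral 16∫₀^μ (μ−r)·r·e^{−2(μ−r)²−2r²} dr equals [2μ − √π·e^{μ²}·(1−2μ²)·erf(μ)]·e^{−2μ²}. -/

import Mathlib

open MeasureTheory Real

/-- The error function. -/
noncomputable def erf (x : ℝ) : ℝ := (2 / Real.sqrt π) * ∫ t in (0:ℝ)..x, Real.exp (-t ^ 2)

lemma erf_hasDerivAt (x : ℝ) :
    HasDerivAt erf ((2 / Real.sqrt π) * Real.exp (-x ^ 2)) x := by
  have hcont : Continuous fun t : ℝ => Real.exp (-t ^ 2) := by continuity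
  have h : HasDerivAt (fun y : ℝ => ∫ t in (0:ℝ)..y, Real.exp (-t ^ 2))
      (Real.exp (-x ^ 2)) x := by
    exact intervalIntegral.integral_hasDerivAt_right
      (hcont.intervalIntegrable 0 x)
      (hcont.stronglyMeasurableAtFilter _ _)
      hcont.continuousAt
  exact h.const_mul (2 / Real.sqrt π)

lemma erf_neg (x : ℝ) : erf (-x) = - erf x := by
  unfold erf
  have : ∫ t in (0:ℝ)..(-x), Real.exp (-t ^ 2)
      = - ∫ t in (0:ℝ)..x, Real.exp (-t ^ 2) := by
    have h1 : ∫ t in (0:ℝ)..(-x), Real.exp (-t ^ 2)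
        = ∫ t in (0:ℝ)..(-x), Real.exp (-(-t) ^ 2) := by
      apply intervalIntegral.integral_congr; intro t _; simp only [neg_sq]
    rw [h1, intervalIntegral.integral_comp_neg (fun t => Real.exp (-t ^ 2))]
    rw [neg_neg, neg_zero, intervalIntegral.integral_symm]
  rw [this]; ring

theorem stmt_8 (μ : ℝ) (hμ : 0 ≤ μ) :
    16 * ∫ r in (0:ℝ)..μ, (μ - r) * r * Real.exp (-2 * (μ - r) ^ 2 - 2 * r ^ 2) =
      (2 * μ - Real.sqrt π * Real.exp (μ ^ 2) * (1 - 2 * μ ^ 2) * erf μ) *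
        Real.exp (-2 * μ ^ 2) := by
  have hsπ : (0:ℝ) < Real.sqrt π := Real.sqrt_pos.mpr Real.pi_pos
  set G : ℝ → ℝ := fun r => (r / 8 - μ / 16) * Real.exp (-4 * r ^ 2 + 4 * μ * r - 2 * μ ^ 2)
      + (μ ^ 2 / 4 - 1 / 8) * (Real.sqrt π / 4) * Real.exp (-μ ^ 2) * erf (2 * r - μ) with hG
  have hderiv : ∀ r : ℝ, HasDerivAt G ((μ - r) * r * Real.exp (-2 * (μ - r) ^ 2 - 2 * r ^ 2)) r := by
    intro r
    have hE : HasDerivAt (fun r : ℝ => -4 * r ^ 2 + 4 * μ * r - 2 * μ ^ 2) (-8 * r + 4 * μ) r := by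
      have h1 : HasDerivAt (fun r : ℝ => r ^ 2) (2 * r) r := by
        simpa using hasDerivAt_pow 2 r
      have := ((h1.const_mul (-4)).add ((hasDerivAt_id r).const_mul (4 * μ))).sub_const (2 * μ ^ 2)
      exact this.congr_deriv (by ring)
    have hexpE : HasDerivAt (fun r : ℝ => Real.exp (-4 * r ^ 2 + 4 * μ * r - 2 * μ ^ 2))
        (Real.exp (-4 * r ^ 2 + 4 * μ * r - 2 * μ ^ 2) * (-8 * r + 4 * μ)) r := hE.exp
    have hlin : HasDerivAt (fun r : ℝ => r / 8 - μ / 16) (1 / 8) r := by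
      simpa using ((hasDerivAt_id r).div_const 8).sub_const (μ / 16)
    have haff : HasDerivAt (fun r : ℝ => 2 * r - μ) 2 r := by
      simpa using ((hasDerivAt_id r).const_mul 2).sub_const μ
    have herf : HasDerivAt (fun r : ℝ => erf (2 * r - μ))
        ((2 / Real.sqrt π) * Real.exp (-(2 * r - μ) ^ 2) * 2) r :=
      by have := (erf_hasDerivAt (2 * r - μ)).comp r haff; exact this
    have hcomb := (hlin.mul hexpE).add
      ((herf).const_mul ((μ ^ 2 / 4 - 1 / 8) * (Real.sqrt π / 4) * Real.exp (-μ ^ 2)))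
    refine hcomb.congr_deriv ?_
    have he1 : Real.exp (-μ ^ 2) * Real.exp (-(2 * r - μ) ^ 2)
        = Real.exp (-4 * r ^ 2 + 4 * μ * r - 2 * μ ^ 2) := by
      rw [← Real.exp_add]; ring_nf
    have he2 : Real.exp (-2 * (μ - r) ^ 2 - 2 * r ^ 2)
        = Real.exp (-4 * r ^ 2 + 4 * μ * r - 2 * μ ^ 2) := by
      congr 1; ring
    rw [he2, ← he1]
    field_simp
    ring
  have hcont : Continuous fun r : ℝ => (μ - r) * r * Real.exp (-2 * (μ - r) ^ 2 - 2 * r ^ 2) := by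
    continuity
  have hFTC := intervalIntegral.integral_eq_sub_of_hasDerivAt
    (fun r _ => hderiv r) (hcont.intervalIntegrable 0 μ)
  rw [hFTC, hG]
  simp only
  rw [show 2 * μ - μ = μ by ring, show 2 * 0 - μ = -μ by ring, erf_neg,
    show -4 * μ ^ 2 + 4 * μ * μ - 2 * μ ^ 2 = -2 * μ ^ 2 by ring,
    show -4 * 0 ^ 2 + 4 * μ * 0 - 2 * μ ^ 2 = -2 * μ ^ 2 by ring]
  have he3 : Real.exp (μ ^ 2) * Real.exp (-2 * μ ^ 2) = Real.exp (-μ ^ 2) := by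
    rw [← Real.exp_add]; ring_nf
  linear_combination (Real.sqrt π * (1 - 2 * μ ^ 2) * erf μ) * he3
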